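/- In the linear best-reply environment on I = [0,1] (strategic complements), let 0 = μ*₀ < μ*₁ < ⋯ < μ*_K = 1 be an equidistant-expectations sequence, i.e. μ*_k = (E[μ|(μ*_{k−1}, μ*_k]] + E[μ|(μ*_k, μ*_{k+1}]])/2 for every k = 1,…,K−1. Then there exist reals μ̲_k < μ*_k < μ̄_k (k = 1,…,K−1) such that for every sequence 0 = μ₀ < μ₁ < ⋯ < μ_K = 1 with μ_k ∈ (μ̲_k, μ̄_k) for all k = 1,…,K−1, the interval analogy partition (α_k)_{k=1}^K it defines is locally clustered with respect to the induced ABEE; that is, the partition together with the corresponding ABEE is a locally clustered analogy-based expectation equilibrium. -/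

import Mathlib

open MeasureTheory Set

/-- Conditional mean of `μ` on the interval `(s, t]` under the density `f`. -/
noncomputable def condMu (f : ℝ → ℝ) (s t : ℝ) : ℝ :=
  (∫ x in Ioc s t, x * f x) / ∫ x in Ioc s t, f x

/-- The `k`-th class of the interval analogy partition with cut points `m`:
`α₁ = [μ₀, μ₁]` and `α_k = (μ_{k-1}, μ_k]` for `k ≥ 2`. -/
noncomputable def clSet (m : ℕ → ℝ) (k : ℕ) : Set ℝ :=
  if k = 1 then Icc (m 0) (m 1) else Ioc (m (k - 1)) (m k)

/-- The ABEE prototype (analogy-based expectation) of class `α_k`. -/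
noncomputable def betak (f : ℝ → ℝ) (A B C : ℝ) (m : ℕ → ℝ) (k : ℕ) : ℝ :=
  (A + B * condMu f (m (k - 1)) (m k)) / (1 - C * condMu f (m (k - 1)) (m k))

/-- The ABEE action in game `μ` of class `α_k`. -/
noncomputable def abeek (f : ℝ → ℝ) (A B C : ℝ) (m : ℕ → ℝ) (k : ℕ) (μ : ℝ) : ℝ :=
  A + μ * (B + A * C) / (1 - C * condMu f (m (k - 1)) (m k))

section Aux
variable {f : ℝ → ℝ}

lemma pos_int {g : ℝ → ℝ} {s t : ℝ} (h0 : 0 ≤ s) (hst : s < t) (h1 : t ≤ 1)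
    (hg : ContinuousOn g (Icc 0 1)) (hpos : ∀ x ∈ Ioo s t, 0 < g x) :
    0 < ∫ x in Ioc s t, g x := by
  rw [← intervalIntegral.integral_of_le hst.le]
  refine intervalIntegral.intervalIntegral_pos_of_pos_on ?_ hpos hst
  refine (hg.mono ?_).intervalIntegrable
  rw [uIcc_of_le hst.le]
  exact Icc_subset_Icc h0 h1

lemma int_pos (hf : ContinuousOn f (Icc 0 1)) (hfpos : ∀ x ∈ Icc (0:ℝ) 1, 0 < f x)
    {s t : ℝ} (h0 : 0 ≤ s) (hst : s < t) (h1 : t ≤ 1) :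
    0 < ∫ x in Ioc s t, f x :=
  pos_int h0 hst h1 hf fun x hx => hfpos x ⟨le_trans h0 hx.1.le, le_trans hx.2.le h1⟩

lemma integrableOn_sub (hg : ContinuousOn f (Icc 0 1)) {s t : ℝ} (h0 : 0 ≤ s) (hst : s ≤ t)
    (h1 : t ≤ 1) : IntegrableOn f (Ioc s t) := by
  refine (hg.mono (Icc_subset_Icc h0 h1)).integrableOn_Icc.mono_set Ioc_subset_Icc_self

lemma condMu_bounds (hf : ContinuousOn f (Icc 0 1)) (hfpos : ∀ x ∈ Icc (0:ℝ) 1, 0 < f x)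
    {s t : ℝ} (h0 : 0 ≤ s) (hst : s < t) (h1 : t ≤ 1) :
    s < condMu f s t ∧ condMu f s t < t := by
  have hI0 : 0 < ∫ x in Ioc s t, f x := int_pos hf hfpos h0 hst h1
  have hid : ContinuousOn (fun x : ℝ => x) (Icc 0 1) := continuousOn_id
  have hxf : ContinuousOn (fun x => x * f x) (Icc 0 1) := hid.mul hf
  have hintf : IntegrableOn f (Ioc s t) := integrableOn_sub hf h0 hst.le h1
  have hintxf : IntegrableOn (fun x => x * f x) (Ioc s t) := integrableOn_sub hxf h0 hst.le h1
  constructor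
  · rw [condMu, lt_div_iff₀ hI0]
    have key : 0 < ∫ x in Ioc s t, (x - s) * f x := by
      refine pos_int h0 hst h1 ((hid.sub continuousOn_const).mul hf) fun x hx => ?_
      exact mul_pos (by linarith [hx.1]) (hfpos x ⟨le_trans h0 hx.1.le, le_trans hx.2.le h1⟩)
    have : ∫ x in Ioc s t, (x - s) * f x
        = (∫ x in Ioc s t, x * f x) - s * ∫ x in Ioc s t, f x := by
      rw [← integral_const_mul, ← integral_sub hintxf (hintf.const_mul s)]
      exact setIntegral_congr_fun measurableSet_Ioc fun x _ => by ring
    linarith [this ▸ key]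
  · rw [condMu, div_lt_iff₀ hI0]
    have key : 0 < ∫ x in Ioc s t, (t - x) * f x := by
      refine pos_int h0 hst h1 ((continuousOn_const.sub hid).mul hf) fun x hx => ?_
      exact mul_pos (by linarith [hx.2]) (hfpos x ⟨le_trans h0 hx.1.le, le_trans hx.2.le h1⟩)
    have : ∫ x in Ioc s t, (t - x) * f x
        = t * (∫ x in Ioc s t, f x) - ∫ x in Ioc s t, x * f x := by
      rw [← integral_const_mul, ← integral_sub (hintf.const_mul t) hintxf]
      exact setIntegral_congr_fun measurableSet_Ioc fun x _ => by ring
    linarith [this ▸ key]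

lemma split_int {g : ℝ → ℝ} (hg : ContinuousOn g (Icc 0 1)) {s t : ℝ} (h0 : 0 ≤ s)
    (hst : s ≤ t) (h1 : t ≤ 1) :
    ∫ x in Ioc s t, g x = (∫ x in Ioc 0 t, g x) - ∫ x in Ioc 0 s, g x := by
  have hu : Ioc (0:ℝ) s ∪ Ioc s t = Ioc 0 t := Ioc_union_Ioc_eq_Ioc h0 hst
  have hd : Disjoint (Ioc (0:ℝ) s) (Ioc s t) := by
    simp [Set.Ioc_disjoint_Ioc, le_max_iff]
  have := MeasureTheory.setIntegral_union hd measurableSet_Ioc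
    (integrableOn_sub hg le_rfl h0 (le_trans hst h1))
    (integrableOn_sub hg h0 hst h1)
  rw [hu] at this
  linarith [this]

end Aux

section Nbhd
variable {f : ℝ → ℝ}

lemma nbhd (hf : ContinuousOn f (Icc 0 1)) (hfpos : ∀ x ∈ Icc (0:ℝ) 1, 0 < f x)
    (C : ℝ) (hC0 : 0 < C) (hC1 : C < 1)
    (p q r : ℝ) (hp : 0 ≤ p) (hpq : p < q) (hqr : q < r) (hr : r ≤ 1)
    (hequi : q = (condMu f p q + condMu f q r) / 2) :
    ∃ δ > 0, ∀ a b c : ℝ, 0 ≤ a → a < b → b < c → c ≤ 1 →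
      |a - p| < δ → |b - q| < δ → |c - r| < δ →
      2 * b * (1 - C * condMu f b c) ≤
          condMu f a b * (1 - C * condMu f b c) + condMu f b c * (1 - C * condMu f a b) ∧
        condMu f a b * (1 - C * condMu f b c) + condMu f b c * (1 - C * condMu f a b) ≤
          2 * b * (1 - C * condMu f a b) := by
  classical
  have hxf : ContinuousOn (fun x : ℝ => x * f x) (Icc 0 1) := continuousOn_id.mul hf
  set P0 : ℝ → ℝ := fun u => ∫ x in Ioc 0 u, f x with hP0def
  set P1 : ℝ → ℝ := fun u => ∫ x in Ioc 0 u, x * f x with hP1def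
  have hP0cont : ContinuousOn P0 (Icc 0 1) :=
    intervalIntegral.continuousOn_primitive (hf.integrableOn_Icc)
  have hP1cont : ContinuousOn P1 (Icc 0 1) :=
    intervalIntegral.continuousOn_primitive (hxf.integrableOn_Icc)
  -- condMu in terms of primitives
  have hcond : ∀ s t : ℝ, 0 ≤ s → s < t → t ≤ 1 →
      condMu f s t = (P1 t - P1 s) / (P0 t - P0 s) := by
    intro s t h0 hst h1
    rw [condMu, split_int hf h0 hst.le h1, split_int hxf h0 hst.le h1]
  -- the set and the function
  set T : Set (ℝ × ℝ × ℝ) := {z | 0 ≤ z.1 ∧ z.1 < z.2.1 ∧ z.2.1 < z.2.2 ∧ z.2.2 ≤ 1} with hTdef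
  set E1 : ℝ × ℝ × ℝ → ℝ := fun z => (P1 z.2.1 - P1 z.1) / (P0 z.2.1 - P0 z.1) with hE1def
  set E2 : ℝ × ℝ × ℝ → ℝ := fun z => (P1 z.2.2 - P1 z.2.1) / (P0 z.2.2 - P0 z.2.1) with hE2def
  set h : ℝ × ℝ × ℝ → ℝ := fun z =>
    min (E1 z * (1 - C * E2 z) + E2 z * (1 - C * E1 z) - 2 * z.2.1 * (1 - C * E2 z))
      (2 * z.2.1 * (1 - C * E1 z) - (E1 z * (1 - C * E2 z) + E2 z * (1 - C * E1 z))) with hhdef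
  have hptT : (p, q, r) ∈ T := ⟨hp, hpq, hqr, hr⟩
  have hq1 : q ≤ 1 := le_trans hqr.le hr
  have hr0 : 0 ≤ r := le_trans hp (le_trans hpq.le hqr.le)
  have hq0 : 0 ≤ q := le_trans hp hpq.le
  -- continuity within T at (p,q,r)
  have hmaps1 : MapsTo (fun z : ℝ × ℝ × ℝ => z.1) T (Icc 0 1) := fun z hz =>
    ⟨hz.1, le_trans hz.2.1.le (le_trans hz.2.2.1.le hz.2.2.2)⟩
  have hmaps2 : MapsTo (fun z : ℝ × ℝ × ℝ => z.2.1) T (Icc 0 1) := fun z hz =>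
    ⟨le_trans hz.1 hz.2.1.le, le_trans hz.2.2.1.le hz.2.2.2⟩
  have hmaps3 : MapsTo (fun z : ℝ × ℝ × ℝ => z.2.2) T (Icc 0 1) := fun z hz =>
    ⟨le_trans (le_trans hz.1 hz.2.1.le) hz.2.2.1.le, hz.2.2.2⟩
  have hc1 : ContinuousWithinAt (fun z : ℝ × ℝ × ℝ => z.1) T (p, q, r) :=
    continuous_fst.continuousWithinAt
  have hc2 : ContinuousWithinAt (fun z : ℝ × ℝ × ℝ => z.2.1) T (p, q, r) :=
    (continuous_fst.comp continuous_snd).continuousWithinAt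
  have hc3 : ContinuousWithinAt (fun z : ℝ × ℝ × ℝ => z.2.2) T (p, q, r) :=
    (continuous_snd.comp continuous_snd).continuousWithinAt
  have hP0a : ContinuousWithinAt (fun z : ℝ × ℝ × ℝ => P0 z.1) T (p, q, r) :=
    ContinuousWithinAt.comp (g := P0) (hP0cont p ⟨hp, le_trans hpq.le hq1⟩) hc1 hmaps1
  have hP0b : ContinuousWithinAt (fun z : ℝ × ℝ × ℝ => P0 z.2.1) T (p, q, r) :=
    ContinuousWithinAt.comp (g := P0) (hP0cont q ⟨hq0, hq1⟩) hc2 hmaps2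
  have hP0c : ContinuousWithinAt (fun z : ℝ × ℝ × ℝ => P0 z.2.2) T (p, q, r) :=
    ContinuousWithinAt.comp (g := P0) (hP0cont r ⟨hr0, hr⟩) hc3 hmaps3
  have hP1a : ContinuousWithinAt (fun z : ℝ × ℝ × ℝ => P1 z.1) T (p, q, r) :=
    ContinuousWithinAt.comp (g := P1) (hP1cont p ⟨hp, le_trans hpq.le hq1⟩) hc1 hmaps1
  have hP1b : ContinuousWithinAt (fun z : ℝ × ℝ × ℝ => P1 z.2.1) T (p, q, r) :=
    ContinuousWithinAt.comp (g := P1) (hP1cont q ⟨hq0, hq1⟩) hc2 hmaps2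
  have hP1c : ContinuousWithinAt (fun z : ℝ × ℝ × ℝ => P1 z.2.2) T (p, q, r) :=
    ContinuousWithinAt.comp (g := P1) (hP1cont r ⟨hr0, hr⟩) hc3 hmaps3
  have hden1 : P0 q - P0 p ≠ 0 := by
    have := int_pos hf hfpos hp hpq hq1
    rw [split_int hf hp hpq.le hq1] at this
    linarith
  have hden2 : P0 r - P0 q ≠ 0 := by
    have := int_pos hf hfpos hq0 hqr hr
    rw [split_int hf hq0 hqr.le hr] at this
    linarith
  have hE1cont : ContinuousWithinAt E1 T (p, q, r) := (hP1b.sub hP1a).div (hP0b.sub hP0a) hden1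
  have hE2cont : ContinuousWithinAt E2 T (p, q, r) := (hP1c.sub hP1b).div (hP0c.sub hP0b) hden2
  have hhcont : ContinuousWithinAt h T (p, q, r) := by
    have hA : ContinuousWithinAt (fun z : ℝ × ℝ × ℝ =>
        E1 z * (1 - C * E2 z) + E2 z * (1 - C * E1 z) - 2 * z.2.1 * (1 - C * E2 z)) T (p, q, r) :=
      ((hE1cont.mul (continuousWithinAt_const.sub (continuousWithinAt_const.mul
        hE2cont))).add (hE2cont.mul (continuousWithinAt_const.sub
        (continuousWithinAt_const.mul hE1cont)))).sub
        ((continuousWithinAt_const.mul hc2).mul (continuousWithinAt_const.sub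
        (continuousWithinAt_const.mul hE2cont)))
    have hB : ContinuousWithinAt (fun z : ℝ × ℝ × ℝ =>
        2 * z.2.1 * (1 - C * E1 z) - (E1 z * (1 - C * E2 z) + E2 z * (1 - C * E1 z))) T (p, q, r) :=
      (((continuousWithinAt_const.mul hc2).mul (continuousWithinAt_const.sub
        (continuousWithinAt_const.mul hE1cont)))).sub
        ((hE1cont.mul (continuousWithinAt_const.sub (continuousWithinAt_const.mul
        hE2cont))).add (hE2cont.mul (continuousWithinAt_const.sub
        (continuousWithinAt_const.mul hE1cont))))
    exact Filter.Tendsto.min hA hB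
  -- positivity at the point
  have hE1pt : E1 (p, q, r) = condMu f p q := by
    rw [hcond p q hp hpq hq1]
  have hE2pt : E2 (p, q, r) = condMu f q r := by
    rw [hcond q r hq0 hqr hr]
  have he1 := condMu_bounds hf hfpos hp hpq hq1
  have he2 := condMu_bounds hf hfpos hq0 hqr hr
  have hhpos : 0 < h (p, q, r) := by
    rw [hhdef]
    simp only [hE1pt, hE2pt, lt_min_iff]
    set e1 := condMu f p q with he1d
    set e2 := condMu f q r with he2d
    have h10 : 0 < e1 := lt_of_le_of_lt hp he1.1
    have h20 : 0 < e2 := lt_of_lt_of_le h10 (le_of_lt (lt_trans he1.2 he2.1))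
    have h12 : e1 < e2 := lt_trans he1.2 he2.1
    have hd1 : 0 < 1 - C * e1 := by nlinarith [he1.2, hq1]
    have hd2 : 0 < 1 - C * e2 := by nlinarith [he2.2, hr]
    have hqeq : q = (e1 + e2) / 2 := hequi
    constructor
    · nlinarith [hqeq, mul_pos (mul_pos h20 hC0) (sub_pos.mpr h12)]
    · nlinarith [hqeq, mul_pos (mul_pos h10 hC0) (sub_pos.mpr h12)]
  -- extract δ
  obtain ⟨δ, hδ0, hδ⟩ := Metric.continuousWithinAt_iff.mp hhcont (h (p, q, r)) hhpos
  refine ⟨δ, hδ0, fun a b c ha hab hbc hc hda hdb hdc => ?_⟩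
  have hb1 : b ≤ 1 := le_trans hbc.le hc
  have hzT : (a, b, c) ∈ T := ⟨ha, hab, hbc, hc⟩
  have hdist : dist ((a, b, c) : ℝ × ℝ × ℝ) (p, q, r) < δ := by
    rw [Prod.dist_eq, Prod.dist_eq]
    simp only [Real.dist_eq]
    exact max_lt hda (max_lt hdb hdc)
  have := hδ hzT hdist
  rw [Real.dist_eq] at this
  have hzpos : 0 < h (a, b, c) := by
    have := abs_lt.mp this
    linarith [this.1]
  rw [hhdef] at hzpos
  simp only [lt_min_iff] at hzpos
  have hE1z : E1 (a, b, c) = condMu f a b := (hcond a b ha hab hb1).symm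
  have hE2z : E2 (a, b, c) = condMu f b c := (hcond b c (le_trans ha hab.le) hbc hc).symm
  rw [hE1z, hE2z] at hzpos
  exact ⟨by linarith [hzpos.1], by linarith [hzpos.2]⟩

end Nbhd

/-- Conditional expectation of class `k`. -/
noncomputable def Ek (f : ℝ → ℝ) (m : ℕ → ℝ) (k : ℕ) : ℝ := condMu f (m (k - 1)) (m k)

/-- Denominator `1 - C E_k`. -/
noncomputable def dk (f : ℝ → ℝ) (C : ℝ) (m : ℕ → ℝ) (k : ℕ) : ℝ := 1 - C * Ek f m k

/-- Normalized prototype position `E_k / (1 - C E_k)`. -/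
noncomputable def Yk (f : ℝ → ℝ) (C : ℝ) (m : ℕ → ℝ) (k : ℕ) : ℝ := Ek f m k / dk f C m k

lemma sq_le_right (x u v : ℝ) (huv : u ≤ v) (hx : 2 * x ≤ u + v) : (x - u)^2 ≤ (x - v)^2 := by
  nlinarith

lemma sq_le_left (x u v : ℝ) (huv : v ≤ u) (hx : u + v ≤ 2 * x) : (x - u)^2 ≤ (x - v)^2 := by
  nlinarith

set_option maxHeartbeats 1000000 in
theorem complements_equidistant_locally_clustered
    (K : ℕ) (hK : 1 ≤ K)
    (f : ℝ → ℝ) (hf : ContinuousOn f (Icc 0 1))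
    (hfpos : ∀ x ∈ Icc (0 : ℝ) 1, 0 < f x)
    (A B C : ℝ) (hC0 : 0 < C) (hC1 : C < 1)
    (μe : ℕ → ℝ) (hμe0 : μe 0 = 0) (hμeK : μe K = 1)
    (hμemono : ∀ k < K, μe k < μe (k + 1))
    (hequi : ∀ k, 1 ≤ k → k < K →
      μe k = (condMu f (μe (k - 1)) (μe k) + condMu f (μe k) (μe (k + 1))) / 2) :
    ∃ lo hi : ℕ → ℝ,
      (∀ k, 1 ≤ k → k < K → lo k < μe k ∧ μe k < hi k) ∧
      ∀ m : ℕ → ℝ, m 0 = 0 → m K = 1 → (∀ k < K, m k < m (k + 1)) →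
        (∀ k, 1 ≤ k → k < K → lo k < m k ∧ m k < hi k) →
        ∀ k k', 1 ≤ k → k ≤ K → 1 ≤ k' → k' ≤ K → ∀ μ ∈ clSet m k,
          (abeek f A B C m k μ - betak f A B C m k) ^ 2 ≤
            (abeek f A B C m k μ - betak f A B C m k') ^ 2 := by
  classical
  -- monotone chain
  have chain : ∀ (m : ℕ → ℝ), (∀ k < K, m k < m (k + 1)) →
      ∀ i j, i ≤ j → j ≤ K → m i ≤ m j := by
    intro m hm i j hij hjK
    induction j with
    | zero =>
      have : i = 0 := by omega
      simp [this]
    | succ n ih =>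
      rcases Nat.lt_or_ge i (n + 1) with h | h
      · have h1 : i ≤ n := by omega
        have h2 := ih h1 (by omega)
        have h3 := hm n (by omega)
        linarith
      · have : i = n + 1 := by omega
        simp [this]
  have chainμ := chain μe hμemono
  -- per-boundary δ
  have hex : ∀ j : ℕ, ∃ δ : ℝ, 0 < δ ∧ (1 ≤ j → j < K →
      ∀ a b c : ℝ, 0 ≤ a → a < b → b < c → c ≤ 1 →
      |a - μe (j - 1)| < δ → |b - μe j| < δ → |c - μe (j + 1)| < δ →
      2 * b * (1 - C * condMu f b c) ≤
          condMu f a b * (1 - C * condMu f b c) + condMu f b c * (1 - C * condMu f a b) ∧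
        condMu f a b * (1 - C * condMu f b c) + condMu f b c * (1 - C * condMu f a b) ≤
          2 * b * (1 - C * condMu f a b)) := by
    intro j
    by_cases hj : 1 ≤ j ∧ j < K
    · have hp : 0 ≤ μe (j - 1) := by
        have := chainμ 0 (j - 1) (by omega) (by omega)
        rw [hμe0] at this; exact this
      have hpq : μe (j - 1) < μe j := by
        have := hμemono (j - 1) (by omega)
        rwa [Nat.sub_add_cancel hj.1] at this
      have hqr : μe j < μe (j + 1) := hμemono j hj.2
      have hr : μe (j + 1) ≤ 1 := by
        have := chainμ (j + 1) K (by omega) le_rfl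
        rw [hμeK] at this; exact this
      obtain ⟨δ, hδ0, hδ⟩ := nbhd hf hfpos C hC0 hC1 (μe (j - 1)) (μe j) (μe (j + 1))
        hp hpq hqr hr (hequi j hj.1 hj.2)
      exact ⟨δ, hδ0, fun _ _ => hδ⟩
    · exact ⟨1, one_pos, fun h1 h2 => absurd ⟨h1, h2⟩ hj⟩
  choose Δ hΔ0 hΔ using hex
  set S : Finset ℕ := Finset.Icc 1 (K - 1) with hSdef
  set δ : ℝ := if hS : S.Nonempty then S.inf' hS Δ else 1 with hδdef
  have hδ0 : 0 < δ := by
    rw [hδdef]; split_ifs with hS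
    · exact (Finset.lt_inf'_iff hS).mpr fun i _ => hΔ0 i
    · exact one_pos
  have hδle : ∀ j ∈ S, δ ≤ Δ j := by
    intro j hj
    rw [hδdef, dif_pos ⟨j, hj⟩]
    exact Finset.inf'_le _ hj
  refine ⟨fun k => μe k - δ, fun k => μe k + δ,
    fun k _ _ => ⟨show μe k - δ < μe k by linarith, show μe k < μe k + δ by linarith⟩, ?_⟩
  intro m hm0 hmK hmmono hmin
  have mchain := chain m hmmono
  have hm01 : ∀ j, j ≤ K → 0 ≤ m j ∧ m j ≤ 1 := by
    intro j hj
    constructor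
    · have := mchain 0 j (by omega) hj; rw [hm0] at this; exact this
    · have := mchain j K hj le_rfl; rw [hmK] at this; exact this
  have habs : ∀ i, i ≤ K → |m i - μe i| < δ := by
    intro i hi
    by_cases h0 : i = 0
    · subst h0; rw [hm0, hμe0]; simpa using hδ0
    by_cases hKi : i = K
    · subst hKi; rw [hmK, hμeK]; simpa using hδ0
    · obtain ⟨hl, hr⟩ := hmin i (by omega) (by omega)
      change μe i - δ < m i at hl
      change m i < μe i + δ at hr
      rw [abs_sub_lt_iff]
      constructor <;> linarith
  have hcut : ∀ k, 1 ≤ k → k ≤ K → m (k - 1) < m k := by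
    intro k h1 h2
    have := hmmono (k - 1) (by omega)
    rwa [Nat.sub_add_cancel h1] at this
  have hEb : ∀ k, 1 ≤ k → k ≤ K → m (k - 1) < Ek f m k ∧ Ek f m k < m k := by
    intro k h1 h2
    exact condMu_bounds hf hfpos (hm01 (k - 1) (by omega)).1 (hcut k h1 h2) (hm01 k h2).2
  have hdpos : ∀ k, 1 ≤ k → k ≤ K → 0 < dk f C m k := by
    intro k h1 h2
    have hEk := (hEb k h1 h2).2
    have hmk := (hm01 k h2).2
    have hE1 : Ek f m k ≤ 1 := le_trans hEk.le hmk
    rw [dk]; nlinarith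
  have hEsucc : ∀ k, 1 ≤ k → k < K → Ek f m k < Ek f m (k + 1) := by
    intro k h1 h2
    have a1 := (hEb k h1 h2.le).2
    have a2 := (hEb (k + 1) (by omega) h2).1
    have : m (k + 1 - 1) = m k := by norm_num
    rw [this] at a2
    linarith
  have hYsucc : ∀ k, 1 ≤ k → k < K → Yk f C m k < Yk f C m (k + 1) := by
    intro k h1 h2
    have d1 := hdpos k h1 h2.le
    have d2 := hdpos (k + 1) (by omega) h2
    have e12 := hEsucc k h1 h2
    rw [Yk, Yk, div_lt_div_iff₀ d1 d2, dk, dk]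
    nlinarith
  have hYmono : ∀ k k', 1 ≤ k → k < k' → k' ≤ K → Yk f C m k < Yk f C m k' := by
    intro k k' h1 h2 h3
    induction k' with
    | zero => omega
    | succ n ih =>
      rcases Nat.lt_or_ge k n with h | h
      · exact lt_trans (ih h (by omega)) (hYsucc n (by omega) (by omega))
      · have : k = n := by omega
        subst this
        exact hYsucc k h1 (by omega)
  -- boundary conditions
  have hbound : ∀ j, 1 ≤ j → j < K →
      m j / dk f C m j ≤ (Yk f C m j + Yk f C m (j + 1)) / 2 ∧
      (Yk f C m j + Yk f C m (j + 1)) / 2 ≤ m j / dk f C m (j + 1) := by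
    intro j h1 h2
    have hjS : j ∈ S := by rw [hSdef]; rw [Finset.mem_Icc]; omega
    have hdj : δ ≤ Δ j := hδle j hjS
    have hprop := hΔ j h1 h2 (m (j - 1)) (m j) (m (j + 1))
      (hm01 (j - 1) (by omega)).1 (hcut j h1 h2.le) (hmmono j h2)
      (hm01 (j + 1) (by omega)).2
      (lt_of_lt_of_le (habs (j - 1) (by omega)) hdj)
      (lt_of_lt_of_le (habs j (by omega)) hdj)
      (lt_of_lt_of_le (habs (j + 1) (by omega)) hdj)
    have hR' : 2 * m j * dk f C m (j + 1) ≤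
        Ek f m j * dk f C m (j + 1) + Ek f m (j + 1) * dk f C m j := hprop.1
    have hL' : Ek f m j * dk f C m (j + 1) + Ek f m (j + 1) * dk f C m j ≤
        2 * m j * dk f C m j := hprop.2
    have d1 := hdpos j h1 h2.le
    have d2 := hdpos (j + 1) (by omega) h2
    constructor
    · have hiden : (Yk f C m j + Yk f C m (j + 1)) / 2 - m j / dk f C m j
          = (Ek f m j * dk f C m (j + 1) + Ek f m (j + 1) * dk f C m j
              - 2 * m j * dk f C m (j + 1)) / (2 * dk f C m j * dk f C m (j + 1)) := by
        rw [Yk, Yk]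
        field_simp
      have hnn : 0 ≤ (Ek f m j * dk f C m (j + 1) + Ek f m (j + 1) * dk f C m j
          - 2 * m j * dk f C m (j + 1)) / (2 * dk f C m j * dk f C m (j + 1)) :=
        div_nonneg (by linarith) (by positivity)
      linarith only [hiden, hnn]
    · have hiden : m j / dk f C m (j + 1) - (Yk f C m j + Yk f C m (j + 1)) / 2
          = (2 * m j * dk f C m j - (Ek f m j * dk f C m (j + 1)
              + Ek f m (j + 1) * dk f C m j)) / (2 * dk f C m j * dk f C m (j + 1)) := by
        rw [Yk, Yk]
        field_simp
      have hnn : 0 ≤ (2 * m j * dk f C m j - (Ek f m j * dk f C m (j + 1)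
          + Ek f m (j + 1) * dk f C m j)) / (2 * dk f C m j * dk f C m (j + 1)) :=
        div_nonneg (by linarith) (by positivity)
      linarith only [hiden, hnn]
  -- conclusion
  intro k k' hk1 hkK hk'1 hk'K μ hμ
  have hdk := hdpos k hk1 hkK
  have hdk' := hdpos k' hk'1 hk'K
  have hbeta : ∀ i, 1 ≤ i → i ≤ K →
      betak f A B C m i = A + Ek f m i * (B + A * C) / dk f C m i := by
    intro i h1 h2
    have hd := (hdpos i h1 h2).ne'
    have h0 : betak f A B C m i = (A + B * Ek f m i) / dk f C m i := rfl
    rw [h0, dk] at *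
    rw [div_eq_iff hd, add_mul, div_mul_cancel₀ _ hd]
    ring
  have habee : abeek f A B C m k μ = A + μ * (B + A * C) / dk f C m k := rfl
  have hμub : μ ≤ m k := by
    by_cases h : k = 1
    · subst h; rw [clSet, if_pos rfl] at hμ; exact hμ.2
    · rw [clSet, if_neg h] at hμ; exact hμ.2
  rw [habee, hbeta k hk1 hkK, hbeta k' hk'1 hk'K]
  have e1 : (A + μ * (B + A * C) / dk f C m k
      - (A + Ek f m k * (B + A * C) / dk f C m k)) ^ 2
      = (B + A * C) ^ 2 * (μ / dk f C m k - Yk f C m k) ^ 2 := by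
    rw [Yk]; ring
  have e2 : (A + μ * (B + A * C) / dk f C m k
      - (A + Ek f m k' * (B + A * C) / dk f C m k')) ^ 2
      = (B + A * C) ^ 2 * (μ / dk f C m k - Yk f C m k') ^ 2 := by
    rw [Yk]; ring
  rw [e1, e2]
  have key : (μ / dk f C m k - Yk f C m k) ^ 2 ≤ (μ / dk f C m k - Yk f C m k') ^ 2 := by
    rcases lt_trichotomy k k' with hlt | heq | hgt
    · have hkK' : k < K := lt_of_lt_of_le hlt hk'K
      have hR := (hbound k hk1 hkK').1
      have hY1 : Yk f C m (k + 1) ≤ Yk f C m k' := by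
        rcases eq_or_lt_of_le (show k + 1 ≤ k' by omega) with h | h
        · rw [h]
        · exact (hYmono (k + 1) k' (by omega) h hk'K).le
      have hx : μ / dk f C m k ≤ m k / dk f C m k :=
        (div_le_div_iff_of_pos_right hdk).mpr hμub
      have hyy : Yk f C m k < Yk f C m k' := hYmono k k' hk1 hlt hk'K
      exact sq_le_right _ _ _ hyy.le (by linarith only [hR, hY1, hx])
    · rw [heq]
    · have hk2 : 2 ≤ k := by omega
      have hμlb : m (k - 1) < μ := by
        rw [clSet, if_neg (by omega : ¬ k = 1)] at hμ; exact hμ.1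
      have hL := (hbound (k - 1) (by omega) (by omega)).2
      have hco : k - 1 + 1 = k := Nat.sub_add_cancel (by omega)
      rw [hco] at hL
      have hY1 : Yk f C m k' ≤ Yk f C m (k - 1) := by
        rcases eq_or_lt_of_le (show k' ≤ k - 1 by omega) with h | h
        · rw [h]
        · exact (hYmono k' (k - 1) hk'1 h (by omega)).le
      have hyy : Yk f C m k' < Yk f C m k := hYmono k' k hk'1 hgt hkK
      have hx : m (k - 1) / dk f C m k < μ / dk f C m k :=
        (div_lt_div_iff_of_pos_right hdk).mpr hμlb
      exact sq_le_left _ _ _ hyy.le (by linarith only [hL, hY1, hx])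
  exact mul_le_mul_of_nonneg_left key (sq_nonneg _)
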